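/- Let k ≥ 1, let d_k = (v_{k+1} − v_k)/‖v_{k+1} − v_k‖, and let c = (1−s)v_k + s·v_{k+1} with s ∈ [0,1). Set ε(c) = 1 + ⟨b − c, d_k⟩/⟨a − c, d_k⟩. Then ε(c) ∈ (0,1), and the triple (u₁',u₂',u₃') defined by u₁' = ((1−ε)²b + (1−ε)c + a)/(ε²−3ε+3), u₂' = ((1−ε)²c + (1−ε)a + b)/(ε²−3ε+3), u₃' = ((1−ε)²a + (1−ε)b + c)/(ε²−3ε+3) with ε = ε(c) is an ε(c)-cycle for (C₁',C₂',C₃') with support (w₁',w₂',w₃') = (a,b,c). -/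

import Mathlib

noncomputable section
open Real Filter

/-- ℝ³ with the Euclidean structure. -/
abbrev E3 : Type := EuclideanSpace ℝ (Fin 3)
/-- ℝ² with the Euclidean structure. -/
abbrev E2 : Type := EuclideanSpace ℝ (Fin 2)

/-- The real inner product. -/
def ip {E : Type} [NormedAddCommGroup E] [InnerProductSpace ℝ E] (x y : E) : ℝ :=
  inner ℝ x y

/-- `w` is the metric projection of `u` onto `C`, characterised by membership
together with the variational inequality `⟪v - w, u - w⟫ ≤ 0` for all `v ∈ C`. -/
def IsProj {E : Type} [NormedAddCommGroup E] [InnerProductSpace ℝ E]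
    (C : Set E) (u w : E) : Prop :=
  w ∈ C ∧ ∀ v ∈ C, inner ℝ (v - w) (u - w) ≤ (0 : ℝ)

/-- `(u₁,u₂,u₃)` is an ε-cycle for `(C₁,C₂,C₃)` with support `(w₁,w₂,w₃)`. -/
def IsCycleWithSupport {E : Type} [NormedAddCommGroup E] [InnerProductSpace ℝ E]
    (C₁ C₂ C₃ : Set E) (ε : ℝ) (u₁ u₂ u₃ w₁ w₂ w₃ : E) : Prop :=
  IsProj C₁ u₃ w₁ ∧ IsProj C₂ u₁ w₂ ∧ IsProj C₃ u₂ w₃ ∧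
    u₁ = u₃ + ε • (w₁ - u₃) ∧ u₂ = u₁ + ε • (w₂ - u₁) ∧ u₃ = u₂ + ε • (w₃ - u₂)

/-- `(u₁,u₂,u₃)` is an ε-cycle for `(C₁,C₂,C₃)`. -/
def IsCycle {E : Type} [NormedAddCommGroup E] [InnerProductSpace ℝ E]
    (C₁ C₂ C₃ : Set E) (ε : ℝ) (u₁ u₂ u₃ : E) : Prop :=
  ∃ w₁ w₂ w₃ : E, IsCycleWithSupport C₁ C₂ C₃ ε u₁ u₂ u₃ w₁ w₂ w₃

/-- An admissible sequence: strictly increasing (on indices `k ≥ 1`), starting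
at `t₁ = π/4` and converging to `π/2`. -/
def Admissible (t : ℕ → ℝ) : Prop :=
  StrictMonoOn t (Set.Ici 1) ∧ t 1 = π / 4 ∧ Tendsto t atTop (nhds (π / 2))

/-- The segment C₁ = co{(−2,2,1), (−2,2,−1)}. -/
def C1 : Set E3 := convexHull ℝ {WithLp.toLp 2 ![(-2 : ℝ), 2, 1], WithLp.toLp 2 ![(-2 : ℝ), 2, -1]}

/-- The segment C₂ = co{(2,2,1), (2,2,−1)}. -/
def C2 : Set E3 := convexHull ℝ {WithLp.toLp 2 ![(2 : ℝ), 2, 1], WithLp.toLp 2 ![(2 : ℝ), 2, -1]}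

/-- The points pₖ = (cos tₖ, sin tₖ, (−1)ᵏ). -/
def pSeq (t : ℕ → ℝ) (k : ℕ) : E3 := WithLp.toLp 2 ![Real.cos (t k), Real.sin (t k), (-1 : ℝ) ^ k]

/-- C₃ = closed convex hull of {pₖ : k ≥ 1}. -/
def C3 (t : ℕ → ℝ) : Set E3 := closure (convexHull ℝ (pSeq t '' {k | 1 ≤ k}))

/-- a = (−2,2). -/
def aPt : E2 := WithLp.toLp 2 ![(-2 : ℝ), 2]
/-- b = (2,2). -/
def bPt : E2 := WithLp.toLp 2 ![(2 : ℝ), 2]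
/-- vₖ = (cos tₖ, sin tₖ). -/
def vSeq (t : ℕ → ℝ) (k : ℕ) : E2 := WithLp.toLp 2 ![Real.cos (t k), Real.sin (t k)]
/-- C₁' = {a}. -/
def C1' : Set E2 := {aPt}
/-- C₂' = {b}. -/
def C2' : Set E2 := {bPt}
/-- C₃' = closed convex hull of {vₖ : k ≥ 1}. -/
def C3' (t : ℕ → ℝ) : Set E2 := closure (convexHull ℝ (vSeq t '' {k | 1 ≤ k}))

/-- Projection of ℝ³ onto the xy-plane. -/
def projXY (x : E3) : E2 := WithLp.toLp 2 ![x 0, x 1]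

/-- Lifting a point of the xy-plane to height `z`. -/
def liftZ (p : E2) (z : ℝ) : E3 := WithLp.toLp 2 ![p 0, p 1, z]

/-- The solid cylinder D. -/
def Dcyl : Set E3 := {x | x 0 ^ 2 + x 1 ^ 2 ≤ 1 ∧ |x 2| ≤ 1}


/-- Inner product on `E2` in coordinates. -/
lemma ip_eq2 (x y : E2) : (inner ℝ x y : ℝ) = x 0 * y 0 + x 1 * y 1 := by
  simp [PiLp.inner_apply, Fin.sum_univ_two]
  ring

lemma ext2 (x y : E2) (h0 : x 0 = y 0) (h1 : x 1 = y 1) : x = y := by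
  ext i; fin_cases i <;> assumption

lemma aux_key1 (sm cm sh z : ℝ) (h1 : sh ≤ z) (h2 : z = (sm - cm) * (Real.sqrt 2 / 2))
    (hsh : 0 < sh) : sh < sm - cm := by
  have h3 : Real.sqrt 2 < 2 := by
    nlinarith [Real.sq_sqrt (by norm_num : (0:ℝ) ≤ 2), Real.sqrt_nonneg 2]
  have h4 : 0 < Real.sqrt 2 := Real.sqrt_pos.2 (by norm_num)
  nlinarith [h1, h2, h3, h4, hsh]

lemma aux_P (s sm cm sh : ℝ) (hs2 : s < 1) (hsm : 0 < sm) (hcm : 0 < cm)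
    (hsh : 0 < sh) (hsh1 : sh ≤ 1) (hpm : sm^2 + cm^2 = 1) :
    0 < 2*sm + 2*cm - (2*s-1)*sh := by
  have h11 : 1 < sm + cm := by nlinarith [mul_pos hsm hcm]
  nlinarith [h11, hsh, hsh1, hs2]

lemma aux_Q (s sm cm sh : ℝ) (hs1 : 0 ≤ s) (hsh : 0 < sh) (hsmcm : cm < sm)
    (hkey1 : sh < sm - cm) : -2*sm + 2*cm - (2*s-1)*sh < 0 := by
  nlinarith [hkey1, hsmcm, mul_nonneg hs1 hsh.le]

lemma aux_PQ (s cm sh : ℝ) (hs2 : s < 1) (hsh : 0 < sh) (hcm : 0 < cm)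
    (hkey2 : sh < cm) : 0 < 4*cm - 2*(2*s-1)*sh := by
  nlinarith [hkey2, hcm, mul_nonneg (by linarith : (0:ℝ) ≤ 2-2*s) hsh.le]

lemma aux_D (ε : ℝ) : 0 < ε^2 - 3*ε + 3 := by nlinarith [sq_nonneg (ε - 3/2)]

lemma aux_lam (ε sm cm ch : ℝ) (hε0 : 0 < ε) (hε1 : ε < 1) (hsm : 0 < sm)
    (hcm : 0 < cm) (hch : 0 < ch) (hch1 : ch ≤ 1) (hsmcm : cm < sm)
    (hpm : sm^2 + cm^2 = 1) :
    0 < (1-ε)*(2*sm - 2*cm - ch) + (2*sm + 2*cm - ch) := by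
  have h11 : 1 < sm + cm := by nlinarith [mul_pos hsm hcm]
  have h2sm : ch < 2*sm := by nlinarith [mul_pos (by linarith : 0 < sm - cm) (by linarith : 0 < sm + cm)]
  rcases le_or_gt 0 (2*sm - 2*cm - ch) with hA | hA
  · nlinarith [mul_nonneg (by linarith : (0:ℝ) ≤ 1-ε) hA]
  · nlinarith [mul_pos hε0 (by linarith : 0 < -(2*sm - 2*cm - ch))]
set_option maxHeartbeats 4000000 in
theorem stmt7 (t : ℕ → ℝ) (ht : Admissible t) (k : ℕ) (hk : 1 ≤ k)
    (s : ℝ) (hs : s ∈ Set.Ico (0 : ℝ) 1) :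
    let d : E2 := ‖vSeq t (k + 1) - vSeq t k‖⁻¹ • (vSeq t (k + 1) - vSeq t k)
    let c : E2 := (1 - s) • vSeq t k + s • vSeq t (k + 1)
    let ε : ℝ := 1 + ip (bPt - c) d / ip (aPt - c) d
    ε ∈ Set.Ioo (0 : ℝ) 1 ∧
    IsCycleWithSupport C1' C2' (C3' t) ε
      ((ε ^ 2 - 3 * ε + 3)⁻¹ • ((1 - ε) ^ 2 • bPt + (1 - ε) • c + aPt))
      ((ε ^ 2 - 3 * ε + 3)⁻¹ • ((1 - ε) ^ 2 • c + (1 - ε) • aPt + bPt))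
      ((ε ^ 2 - 3 * ε + 3)⁻¹ • ((1 - ε) ^ 2 • aPt + (1 - ε) • bPt + c))
      aPt bPt c := by
  obtain ⟨hmono, ht1, hlim⟩ := ht
  intro d c ε
  have hd : d = ‖vSeq t (k + 1) - vSeq t k‖⁻¹ • (vSeq t (k + 1) - vSeq t k) := rfl
  have hcdef : c = (1 - s) • vSeq t k + s • vSeq t (k + 1) := rfl
  have hεdef : ε = 1 + ip (bPt - c) d / ip (aPt - c) d := rfl
  clear_value d c ε
  have hπ : (0:ℝ) < π := Real.pi_pos
  have hub : ∀ j : ℕ, 1 ≤ j → t j ≤ π / 2 := by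
    intro j hj
    refine ge_of_tendsto hlim ?_
    refine Filter.eventually_atTop.2 ⟨j, fun n hn => ?_⟩
    exact hmono.monotoneOn hj (le_trans hj hn) hn
  have hlow : ∀ j : ℕ, 1 ≤ j → π/4 ≤ t j := by
    intro j hj
    rw [← ht1]
    exact hmono.monotoneOn (by norm_num) hj hj
  have hupper : ∀ j : ℕ, 1 ≤ j → t j < π/2 := by
    intro j hj
    have h1 : t j < t (j+1) := hmono hj (Set.mem_Ici.mpr (by omega)) (by omega)
    exact lt_of_lt_of_le h1 (hub (j+1) (by omega))
  have hαβ : t k < t (k+1) := hmono hk (Set.mem_Ici.mpr (by omega)) (by omega)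
  have hα4 : π/4 ≤ t k := hlow k hk
  have hβ2 : t (k+1) < π/2 := hupper (k+1) (by omega)
  set μ := (t (k+1) + t k)/2 with hμdef
  set δ := (t (k+1) - t k)/2 with hδdef
  have hδ0 : 0 < δ := by rw [hδdef]; linarith
  have hμ4 : π/4 < μ := by rw [hμdef]; linarith
  have hμ2 : μ < π/2 := by rw [hμdef]; linarith
  have hμδ2 : μ + δ < π/2 := by rw [hμdef, hδdef]; linarith
  have hμδ4 : π/4 ≤ μ - δ := by rw [hμdef, hδdef]; linarith
  have hδ8 : δ < π/8 := by rw [hδdef]; linarith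
  have hsm : 0 < Real.sin μ := Real.sin_pos_of_pos_of_lt_pi (by linarith) (by linarith)
  have hcm : 0 < Real.cos μ := Real.cos_pos_of_mem_Ioo ⟨by linarith, hμ2⟩
  have hsh : 0 < Real.sin δ := Real.sin_pos_of_pos_of_lt_pi hδ0 (by linarith)
  have hch : 0 < Real.cos δ := Real.cos_pos_of_mem_Ioo ⟨by linarith, by linarith⟩
  have hch1 : Real.cos δ ≤ 1 := Real.cos_le_one δ
  have hsh1 : Real.sin δ ≤ 1 := Real.sin_le_one δ
  have hpm : Real.sin μ^2 + Real.cos μ^2 = 1 := Real.sin_sq_add_cos_sq μ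
  have hsmcm : Real.cos μ < Real.sin μ := by
    have h1 : Real.sin (π/2 - μ) < Real.sin μ :=
      Real.strictMonoOn_sin ⟨by linarith, by linarith⟩ ⟨by linarith, by linarith⟩ (by linarith)
    rwa [Real.sin_pi_div_two_sub] at h1
  have hkey2 : Real.sin δ < Real.cos μ := by
    have h1 : Real.sin δ < Real.sin (π/2 - μ) :=
      Real.strictMonoOn_sin ⟨by linarith, by linarith⟩ ⟨by linarith, by linarith⟩ (by linarith)
    rwa [Real.sin_pi_div_two_sub] at h1
  have hkey1 : Real.sin δ < Real.sin μ - Real.cos μ := by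
    have h1 : Real.sin δ ≤ Real.sin (μ - π/4) :=
      Real.strictMonoOn_sin.monotoneOn ⟨by linarith, by linarith⟩ ⟨by linarith, by linarith⟩
        (by linarith)
    have h2 : Real.sin (μ - π/4) = (Real.sin μ - Real.cos μ) * (Real.sqrt 2/2) := by
      rw [Real.sin_sub, Real.cos_pi_div_four, Real.sin_pi_div_four]; ring
    exact aux_key1 _ _ _ _ h1 h2 hsh
  -- components
  have hcosα : Real.cos (t k) = Real.cos μ * Real.cos δ + Real.sin μ * Real.sin δ := by
    rw [show t k = μ - δ by rw [hμdef, hδdef]; ring, Real.cos_sub]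
  have hsinα : Real.sin (t k) = Real.sin μ * Real.cos δ - Real.cos μ * Real.sin δ := by
    rw [show t k = μ - δ by rw [hμdef, hδdef]; ring, Real.sin_sub]
  have hcosβ : Real.cos (t (k+1)) = Real.cos μ * Real.cos δ - Real.sin μ * Real.sin δ := by
    rw [show t (k+1) = μ + δ by rw [hμdef, hδdef]; ring, Real.cos_add]
  have hsinβ : Real.sin (t (k+1)) = Real.sin μ * Real.cos δ + Real.cos μ * Real.sin δ := by
    rw [show t (k+1) = μ + δ by rw [hμdef, hδdef]; ring, Real.sin_add]
  have hc0 : c 0 = Real.cos μ * Real.cos δ - (2*s-1)*(Real.sin μ * Real.sin δ) := by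
    rw [hcdef]
    simp only [PiLp.add_apply, PiLp.smul_apply, smul_eq_mul, vSeq, Matrix.cons_val_zero]
    rw [hcosα, hcosβ]; ring
  have hc1 : c 1 = Real.sin μ * Real.cos δ + (2*s-1)*(Real.cos μ * Real.sin δ) := by
    rw [hcdef]
    simp only [PiLp.add_apply, PiLp.smul_apply, smul_eq_mul, vSeq, Matrix.cons_val_one,
      Matrix.head_cons, Matrix.cons_val_zero]
    rw [hsinα, hsinβ]; ring
  have hΔ0 : ((vSeq t (k+1) : E2) - vSeq t k) 0 = -(2*Real.sin μ*Real.sin δ) := by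
    have h1 : ((vSeq t (k+1) : E2) - vSeq t k) 0 = Real.cos (t (k+1)) - Real.cos (t k) := by
      simp [vSeq]
    rw [h1, hcosα, hcosβ]; ring
  have hΔ1 : ((vSeq t (k+1) : E2) - vSeq t k) 1 = 2*Real.sin δ*Real.cos μ := by
    have h1 : ((vSeq t (k+1) : E2) - vSeq t k) 1 = Real.sin (t (k+1)) - Real.sin (t k) := by
      simp [vSeq]
    rw [h1, hsinα, hsinβ]; ring
  have hv0 : ∀ j, (vSeq t j : E2) 0 = Real.cos (t j) := fun j => by simp [vSeq]
  have hv1 : ∀ j, (vSeq t j : E2) 1 = Real.sin (t j) := fun j => by simp [vSeq]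
  have ha0 : aPt 0 = -2 := by simp [aPt]
  have ha1 : aPt 1 = 2 := by simp [aPt]
  have hb0 : bPt 0 = 2 := by simp [bPt]
  have hb1 : bPt 1 = 2 := by simp [bPt]
  have hipa : (inner ℝ (aPt - c) ((vSeq t (k+1) : E2) - vSeq t k) : ℝ) =
      2*Real.sin δ*(2*Real.sin μ + 2*Real.cos μ - (2*s-1)*Real.sin δ) := by
    rw [ip_eq2]
    simp only [PiLp.sub_apply, hv0, hv1, ha0, ha1, hc0, hc1, hcosα, hcosβ, hsinα, hsinβ]
    linear_combination (-2*(2*s-1)*Real.sin δ^2) * hpm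
  have hipb : (inner ℝ (bPt - c) ((vSeq t (k+1) : E2) - vSeq t k) : ℝ) =
      2*Real.sin δ*(-2*Real.sin μ + 2*Real.cos μ - (2*s-1)*Real.sin δ) := by
    rw [ip_eq2]
    simp only [PiLp.sub_apply, hv0, hv1, hb0, hb1, hc0, hc1, hcosα, hcosβ, hsinα, hsinβ]
    linear_combination (-2*(2*s-1)*Real.sin δ^2) * hpm
  have hΔne : ((vSeq t (k+1) : E2) - vSeq t k) ≠ 0 := by
    intro h
    have h0 : ((vSeq t (k+1) : E2) - vSeq t k) 0 = 0 := by rw [h]; rfl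
    rw [hΔ0] at h0
    have := mul_pos hsm hsh
    linarith
  have hrne : ‖(vSeq t (k+1) : E2) - vSeq t k‖⁻¹ ≠ 0 :=
    inv_ne_zero (norm_ne_zero_iff.2 hΔne)
  have hεval : ε = 1 + (-2*Real.sin μ + 2*Real.cos μ - (2*s-1)*Real.sin δ) /
      (2*Real.sin μ + 2*Real.cos μ - (2*s-1)*Real.sin δ) := by
    rw [hεdef, hd]
    unfold ip
    rw [real_inner_smul_right, real_inner_smul_right, hipa, hipb,
      mul_div_mul_left _ _ hrne, mul_comm (2*Real.sin δ), mul_comm (2*Real.sin δ),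
      mul_div_mul_right _ _ (mul_pos two_pos hsh).ne']
  have hP : 0 < 2*Real.sin μ + 2*Real.cos μ - (2*s-1)*Real.sin δ :=
    aux_P s _ _ _ hs.2 hsm hcm hsh hsh1 hpm
  have hQ : -2*Real.sin μ + 2*Real.cos μ - (2*s-1)*Real.sin δ < 0 :=
    aux_Q s _ _ _ hs.1 hsh hsmcm hkey1
  have hPQ : 0 < 4*Real.cos μ - 2*(2*s-1)*Real.sin δ :=
    aux_PQ s _ _ hs.2 hsh hcm hkey2
  have hε1 : ε < 1 := by
    rw [hεval]
    have := div_neg_of_neg_of_pos hQ hP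
    linarith
  have hε0 : 0 < ε := by
    rw [hεval]
    have h1 : (1:ℝ) + (-2*Real.sin μ + 2*Real.cos μ - (2*s-1)*Real.sin δ) /
        (2*Real.sin μ + 2*Real.cos μ - (2*s-1)*Real.sin δ) =
        (4*Real.cos μ - 2*(2*s-1)*Real.sin δ) /
        (2*Real.sin μ + 2*Real.cos μ - (2*s-1)*Real.sin δ) := by
      rw [one_add_div hP.ne']; congr 1; ring
    rw [h1]
    exact div_pos hPQ hP
  have hDpos : 0 < ε^2 - 3*ε + 3 := aux_D ε
  have hD : ε^2 - 3*ε + 3 ≠ 0 := ne_of_gt hDpos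
  have hD' : ε * (ε - 3) + 3 ≠ 0 := by nlinarith [sq_nonneg (ε - 3/2)]
  refine ⟨⟨hε0, hε1⟩, ⟨?_, ?_⟩, ⟨?_, ?_⟩, ⟨?_, ?_⟩, ?_, ?_, ?_⟩
  · exact Set.mem_singleton _
  · intro v hv
    rw [C1', Set.mem_singleton_iff] at hv
    subst hv
    simp
  · exact Set.mem_singleton _
  · intro v hv
    rw [C2', Set.mem_singleton_iff] at hv
    subst hv
    simp
  · -- c ∈ C3' t
    rw [hcdef, C3']
    refine subset_closure ((convex_convexHull ℝ _)
      (subset_convexHull ℝ _ (Set.mem_image_of_mem (vSeq t) (show k ∈ {j : ℕ | 1 ≤ j} from hk)))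
      (subset_convexHull ℝ _ (Set.mem_image_of_mem (vSeq t) (show k+1 ∈ {j : ℕ | 1 ≤ j} by simp)))
      (by linarith [hs.2]) hs.1 (by ring))
  · -- variational inequality for C3'
    have hP0 : (2*Real.sin μ + 2*Real.cos μ - (2*s-1)*Real.sin δ) ≠ 0 := ne_of_gt hP
    have hG : (1-ε) * (2*Real.sin μ + 2*Real.cos μ - (2*s-1)*Real.sin δ)
        = -(-2*Real.sin μ + 2*Real.cos μ - (2*s-1)*Real.sin δ) := by
      rw [hεval, show (1:ℝ) - (1 + (-2*Real.sin μ + 2*Real.cos μ - (2*s-1)*Real.sin δ)/(2*Real.sin μ + 2*Real.cos μ - (2*s-1)*Real.sin δ)) = -((-2*Real.sin μ + 2*Real.cos μ - (2*s-1)*Real.sin δ)/(2*Real.sin μ + 2*Real.cos μ - (2*s-1)*Real.sin δ)) by ring, neg_mul,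
        div_mul_cancel₀ _ hP0]
    have hF1 : c 0 * Real.sin μ - c 1 * Real.cos μ = -((2*s-1) * Real.sin δ) := by
      rw [hc0, hc1]; linear_combination (-(2*s-1)*Real.sin δ) * hpm
    have hF2 : c 0 * Real.cos μ + c 1 * Real.sin μ = Real.cos δ := by
      rw [hc0, hc1]; linear_combination (Real.cos δ) * hpm
    set w0 : ℝ := 2*ε - (2-ε)*(c 0) with hw0def
    set w1 : ℝ := (2-ε)*(2 - c 1) with hw1def
    have horth : w1 * Real.cos μ = w0 * Real.sin μ := by
      rw [hw0def, hw1def]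
      linear_combination hG + (2-ε) * hF1
    have hw0L : w0 = (w0*Real.cos μ + w1*Real.sin μ) * Real.cos μ := by
      linear_combination (-w0) * hpm - Real.sin μ * horth
    have hw1L : w1 = (w0*Real.cos μ + w1*Real.sin μ) * Real.sin μ := by
      linear_combination (-w1) * hpm + Real.cos μ * horth
    have hlamval : w0*Real.cos μ + w1*Real.sin μ
        = (1-ε)*(2*Real.sin μ - 2*Real.cos μ - Real.cos δ)
          + (2*Real.sin μ + 2*Real.cos μ - Real.cos δ) := by
      rw [hw0def, hw1def]
      linear_combination (ε-2) * hF2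
    have hlampos : 0 < w0*Real.cos μ + w1*Real.sin μ := by
      rw [hlamval]
      exact aux_lam ε _ _ _ hε0 hε1 hsm hcm hch hch1 hsmcm hpm
    have hu20 : ((ε ^ 2 - 3 * ε + 3)⁻¹ • ((1 - ε) ^ 2 • c + (1 - ε) • aPt + bPt) - c) 0
        = (ε^2 - 3*ε + 3)⁻¹ * w0 := by
      simp only [PiLp.sub_apply, PiLp.add_apply, PiLp.smul_apply, smul_eq_mul, ha0, hb0]
      rw [hw0def]; linear_combination (c 0) * mul_inv_cancel₀ hD
    have hu21 : ((ε ^ 2 - 3 * ε + 3)⁻¹ • ((1 - ε) ^ 2 • c + (1 - ε) • aPt + bPt) - c) 1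
        = (ε^2 - 3*ε + 3)⁻¹ * w1 := by
      simp only [PiLp.sub_apply, PiLp.add_apply, PiLp.smul_apply, smul_eq_mul, ha1, hb1]
      rw [hw1def]; linear_combination (c 1) * mul_inv_cancel₀ hD
    have hcosj : ∀ j : ℕ, 1 ≤ j → Real.cos (t j - μ) ≤ Real.cos δ := by
      intro j hj
      rcases le_or_gt j k with hjk | hjk
      · have h1 : t j ≤ t k := hmono.monotoneOn (Set.mem_Ici.mpr hj) (Set.mem_Ici.mpr hk) hjk
        have h2 : δ ≤ μ - t j := by rw [hμdef, hδdef]; linarith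
        have h3 : μ - t j ≤ π := by linarith [hlow j hj]
        have h4 := Real.cos_le_cos_of_nonneg_of_le_pi hδ0.le h3 h2
        rwa [show t j - μ = -(μ - t j) by ring, Real.cos_neg]
      · have h1 : t (k+1) ≤ t j :=
          hmono.monotoneOn (Set.mem_Ici.mpr (by omega)) (Set.mem_Ici.mpr hj) (by omega)
        have h2 : δ ≤ t j - μ := by rw [hμdef, hδdef]; linarith
        have h3 : t j - μ ≤ π := by linarith [hupper j hj]
        exact Real.cos_le_cos_of_nonneg_of_le_pi hδ0.le h3 h2
    intro v hv
    have hsub : C3' t ⊆ {x : E2 | (inner ℝ (x - c)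
        ((ε ^ 2 - 3 * ε + 3)⁻¹ • ((1 - ε) ^ 2 • c + (1 - ε) • aPt + bPt) - c) : ℝ) ≤ 0} := by
      rw [C3']
      refine closure_minimal (convexHull_min ?_ ?_) ?_
      · rintro x ⟨j, hj, rfl⟩
        simp only [Set.mem_setOf_eq]
        have hinner : (inner ℝ (vSeq t j - c)
            ((ε ^ 2 - 3 * ε + 3)⁻¹ • ((1 - ε) ^ 2 • c + (1 - ε) • aPt + bPt) - c) : ℝ)
            = (ε^2-3*ε+3)⁻¹ * ((w0*Real.cos μ + w1*Real.sin μ)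
              * (Real.cos (t j - μ) - Real.cos δ)) := by
          rw [ip_eq2, hu20, hu21]
          simp only [PiLp.sub_apply, hv0, hv1]
          rw [Real.cos_sub]
          linear_combination ((ε^2-3*ε+3)⁻¹ * (Real.cos (t j) - c 0)) * hw0L
            + ((ε^2-3*ε+3)⁻¹ * (Real.sin (t j) - c 1)) * hw1L
            - ((ε^2-3*ε+3)⁻¹ * (w0*Real.cos μ + w1*Real.sin μ)) * hF2
        rw [hinner]
        apply mul_nonpos_of_nonneg_of_nonpos (inv_nonneg.mpr hDpos.le)
        exact mul_nonpos_of_nonneg_of_nonpos hlampos.le (by linarith [hcosj j hj])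
      · intro x hx y hy p q hp hq hpq
        simp only [Set.mem_setOf_eq] at hx hy ⊢
        have hxy : p • x + q • y - c = p • (x - c) + q • (y - c) := by
          match_scalars <;> linarith
        rw [hxy, inner_add_left, real_inner_smul_left, real_inner_smul_left]
        exact add_nonpos (mul_nonpos_of_nonneg_of_nonpos hp hx)
          (mul_nonpos_of_nonneg_of_nonpos hq hy)
      · exact isClosed_le
          (Continuous.inner (continuous_id.sub continuous_const) continuous_const)
          continuous_const
    exact hsub hv
  · match_scalars <;> field_simp <;> ring
  · match_scalars <;> field_simp <;> ring
  · match_scalars <;> field_simp <;> ring
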